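/- For all a ∈ c₀₀ and all integers n ≥ 0, ‖a‖_{T̃} ≥ 2^{-n} ρ_n(a), where ρ_n = ‖·‖_{𝓕_n}. -/

import Mathlib

open Ordinal Filter Topology

namespace LTIndex

/-- `E < F` for finite sets: `max E < min F` (with `max ∅ = 0`, `min ∅ = ∞`),
equivalently every element of `E` is less than every element of `F`. -/
def finLT (E F : Finset ℕ) : Prop := ∀ a ∈ E, ∀ b ∈ F, a < b

/-- `min E` (junk value `0` when `E = ∅`). -/
noncomputable def minOf (E : Finset ℕ) : ℕ := sInf (E : Set ℕ)

/-- `{E₁, …, E_n}` is `𝓕`-admissible: the `Eᵢ` are nonempty, `E₁ < ⋯ < E_n`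
and `{min E₁, …, min E_n} ∈ 𝓕`. -/
def IsAdmissible (𝓕 : Set (Finset ℕ)) (l : List (Finset ℕ)) : Prop :=
  (∀ E ∈ l, E.Nonempty) ∧ l.Chain' finLT ∧ (l.map minOf).toFinset ∈ 𝓕

/-- `𝓜[𝓝]`. -/
def famComp (M N : Set (Finset ℕ)) : Set (Finset ℕ) :=
  {F | ∃ l : List (Finset ℕ), IsAdmissible M l ∧ (∀ E ∈ l, E ∈ N) ∧
    F = l.foldr (· ∪ ·) ∅}

/-- `(𝓜, 𝓝) = {M ∪ N : M < N, M ∈ 𝓜, N ∈ 𝓝}`. -/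
def pairFam (M N : Set (Finset ℕ)) : Set (Finset ℕ) :=
  {F | ∃ A ∈ M, ∃ B ∈ N, finLT A B ∧ F = A ∪ B}

/-- `𝓜² = (𝓜, 𝓜)`. -/
def sqFam (M : Set (Finset ℕ)) : Set (Finset ℕ) := pairFam M M

/-- `S₀ = {{n} : n ∈ ℕ} ∪ {∅}`. -/
def schreierZero : Set (Finset ℕ) := {F : Finset ℕ | F.card ≤ 1}

/-- `S₁ = {F : |F| ≤ min F}`. -/
noncomputable def schreierOne : Set (Finset ℕ) := {F : Finset ℕ | F.card ≤ minOf F}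

/-- A ladder system: for every countable limit ordinal `o`, `seq o` is a strictly
increasing sequence of ordinals below `o` with supremum `o`. -/
def IsCtblLadder (seq : Ordinal.{0} → ℕ → Ordinal.{0}) : Prop :=
  ∀ o : Ordinal, o.card ≤ Cardinal.aleph0 → Order.IsSuccLimit o →
    StrictMono (seq o) ∧ (∀ n : ℕ, seq o n < o) ∧ (⨆ n : ℕ, seq o n) = o

/-- The Schreier classes `S_α`, relative to a choice `seq` of ladders at limit
ordinals: `S₀` is the singletons together with `∅`, `S_{α+1} = S₁[S_α]`, and at a
limit `α` (with ladder `(α_n) = seq α`), `S_α = {F : F ∈ S_{α_n} for some n ≤ |F|}`. -/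
noncomputable def schreier (seq : Ordinal.{0} → ℕ → Ordinal.{0}) (o : Ordinal.{0}) :
    Set (Finset ℕ) :=
  Ordinal.limitRecOn (motive := fun _ => Set (Finset ℕ)) o schreierZero
    (fun _ S => famComp schreierOne S)
    (fun o _ ih => {F | ∃ n : ℕ, n ≤ F.card ∧ ∃ h : seq o n < o, F ∈ ih (seq o n) h})

/-- `σ_F(x) = ∑_{n ∈ F} |x n|`. -/
noncomputable def sigmaF (F : Finset ℕ) (x : ℕ →₀ ℝ) : ℝ := ∑ n ∈ F, |x n|

/-- `‖x‖_𝓕 = sup_{F ∈ 𝓕} σ_F(x)`. -/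
noncomputable def famNorm (𝓕 : Set (Finset ℕ)) (x : ℕ →₀ ℝ) : ℝ :=
  sSup {r : ℝ | ∃ F ∈ 𝓕, r = sigmaF F x}

/-- `E x`: the coordinate restriction of `x` to `E`. -/
noncomputable def restr (E : Finset ℕ) (x : ℕ →₀ ℝ) : ℕ →₀ ℝ :=
  Finsupp.filter (· ∈ E) x

/-- The norms `‖·‖_n` (when `Sadm = S_β`), resp. `‖·‖′_n` (when `Sadm = (S_β)²`):
`‖·‖₀ = ‖·‖_{S_α}` and
`‖x‖_{n+1} = max{‖x‖_n, sup{(1/2)∑ᵢ ‖Eᵢx‖_n : {E₁,…,E_j} Sadm-admissible}}`. -/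
noncomputable def normSeq (Sa Sadm : Set (Finset ℕ)) : ℕ → (ℕ →₀ ℝ) → ℝ
  | 0, x => famNorm Sa x
  | n + 1, x =>
      max (normSeq Sa Sadm n x)
        (sSup {r : ℝ | ∃ l : List (Finset ℕ), IsAdmissible Sadm l ∧
          r = (1 / 2) * ((l.map fun E => normSeq Sa Sadm n (restr E x)).sum)})

/-- `‖x‖_{T̃}` (resp. `‖x‖_{T̈}`): the limit (= supremum, the sequence being
nondecreasing) of the norms `‖x‖_n` (resp. `‖x‖′_n`). -/
noncomputable def tnorm (Sa Sadm : Set (Finset ℕ)) (x : ℕ →₀ ℝ) : ℝ :=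
  ⨆ n : ℕ, normSeq Sa Sadm n x

/-- The families `𝓕_n` (with `Sadm = S_β`), resp. `𝓕′_n` (with `Sadm = (S_β)²`):
`𝓕₀ = S_α`, `𝓕_{n+1} = Sadm[𝓕_n]`. -/
def famF (Sa Sadm : Set (Finset ℕ)) : ℕ → Set (Finset ℕ)
  | 0 => Sa
  | n + 1 => famComp Sadm (famF Sa Sadm n)

/-- The families `𝓖_n` (with `Sadm = S_β`), resp. `𝓖′_n` (with `Sadm = (S_β)²`),
reindexed: `famG Sadm n = 𝓖_{n+1}`, i.e. `famG Sadm 0 = 𝓖₁ = Sadm` and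
`𝓖_{n+2} = Sadm[𝓖_{n+1}]`. -/
def famG (Sadm : Set (Finset ℕ)) : ℕ → Set (Finset ℕ)
  | 0 => Sadm
  | n + 1 => famComp Sadm (famG Sadm n)

/-- Hereditary family. -/
def Hereditary (𝓕 : Set (Finset ℕ)) : Prop := ∀ A ∈ 𝓕, ∀ B ⊆ A, B ∈ 𝓕

/-- Spreading family. -/
def Spreading (𝓕 : Set (Finset ℕ)) : Prop :=
  ∀ A ∈ 𝓕, ∀ g : ℕ → ℕ, StrictMonoOn g (A : Set ℕ) → (∀ a ∈ A, a ≤ g a) →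
    A.image g ∈ 𝓕

/-- Compactness of a family of finite sets, viewed inside `2^ℕ` (ℕ → Bool with the
product topology) via characteristic functions. -/
def CompactFam (𝓕 : Set (Finset ℕ)) : Prop :=
  IsCompact ((fun A : Finset ℕ => fun n : ℕ => decide (n ∈ A)) '' 𝓕)

/-- Regular family: hereditary, spreading and compact. -/
def RegularFam (𝓕 : Set (Finset ℕ)) : Prop :=
  Hereditary 𝓕 ∧ Spreading 𝓕 ∧ CompactFam 𝓕

/-- The Cantor–Bendixson derivative of a family of finite subsets of ℕ: the set of
its limit points in the product topology of `2^ℕ` (a basic neighbourhood of `A` is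
determined by an agreement of initial segments). -/
def famDeriv (𝓕 : Set (Finset ℕ)) : Set (Finset ℕ) :=
  {A | ∀ m : ℕ, ∃ B ∈ 𝓕, B ≠ A ∧ B.filter (· ≤ m) = A.filter (· ≤ m)}

/-- Iterated Cantor–Bendixson derivatives `𝓕^{(o)}`. -/
noncomputable def famDerivIter (𝓕 : Set (Finset ℕ)) (o : Ordinal.{0}) : Set (Finset ℕ) :=
  Ordinal.limitRecOn (motive := fun _ => Set (Finset ℕ)) o 𝓕
    (fun _ S => famDeriv S)
    (fun o _ ih => ⋂ (o' : Ordinal) (h : o' < o), ih o' h)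

/-- One step of the standard representation: `A` is obtained from the remainder `R`
as `R ∩ [1, k]` where `k` is the largest element of `F` with `R ∩ [1, k] ∈ 𝓝`. -/
def stepOf (N : Set (Finset ℕ)) (F R A : Finset ℕ) : Prop :=
  ∃ k ∈ F, A = R.filter (· ≤ k) ∧ A ∈ N ∧
    ∀ k' ∈ F, R.filter (· ≤ k') ∈ N → k' ≤ k

/-- `IsStdRepFrom N F R L`: starting from remainder `R`, the list `L` is produced by
the greedy recursion defining the standard representation, exhausting `R`. -/
def IsStdRepFrom (N : Set (Finset ℕ)) (F : Finset ℕ) : Finset ℕ → List (Finset ℕ) → Prop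
  | R, [] => R = ∅
  | R, A :: L => stepOf N F R A ∧ IsStdRepFrom N F (R \ A) L

/-- `L` is the standard representation of `F` (as an element of `𝓜[𝓝]`). -/
def IsStdRep (N : Set (Finset ℕ)) (F : Finset ℕ) (L : List (Finset ℕ)) : Prop :=
  IsStdRepFrom N F F L

section Trees

variable {X : Type*}

/-- A tree on `X`: a set of nonempty finite sequences closed under nonempty initial
segments. -/
def IsTree (T : Set (List X)) : Prop :=
  ∀ l ∈ T, l ≠ [] ∧ ∀ m : ℕ, 0 < m → m < l.length → l.take m ∈ T

/-- A tree is well-founded if it has no infinite branch. -/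
def WellFoundedTree (T : Set (List X)) : Prop :=
  ¬ ∃ f : ℕ → X, ∀ n : ℕ, (List.ofFn fun i : Fin (n + 1) => f i) ∈ T

/-- The derived tree `D(T)`. -/
def treeDeriv (T : Set (List X)) : Set (List X) :=
  {l | l ∈ T ∧ ∃ x : X, l ++ [x] ∈ T}

/-- Iterated derived trees `D^o(T)`. -/
noncomputable def treeDerivIter (T : Set (List X)) (o : Ordinal.{0}) : Set (List X) :=
  Ordinal.limitRecOn (motive := fun _ => Set (List X)) o T
    (fun _ S => treeDeriv S)
    (fun o _ ih => ⋂ (o' : Ordinal) (h : o' < o), ih o' h)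

/-- The order `o(T)` of a (well-founded) tree. -/
noncomputable def treeOrder (T : Set (List X)) : Ordinal.{0} :=
  sInf {o : Ordinal | treeDerivIter T o = ∅}

end Trees

section Banach

variable (X : Type) [NormedAddCommGroup X] [NormedSpace ℝ X]

/-- `cs` witnesses that the node `l` is a finite block basis of `(e_i)`: each entry
of `l` is the (finite, nonzero) linear combination of the `e_i` given by the
corresponding entry of `cs`, and the supports are successive. -/
def IsBlockNode (e : ℕ → X) (l : List X) (cs : List (ℕ →₀ ℝ)) : Prop :=
  cs.length = l.length ∧
  (∀ (i : ℕ) (h : i < cs.length) (h' : i < l.length),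
    l.get ⟨i, h'⟩ = (cs.get ⟨i, h⟩).sum fun n r => r • e n) ∧
  (∀ c ∈ cs, c ≠ 0) ∧
  cs.Chain' fun c d => finLT c.support d.support

/-- `e` is a (Schauder) basis of `X`. -/
def IsSchauderBasis (e : ℕ → X) : Prop :=
  ∀ x : X, ∃! a : ℕ → ℝ,
    Tendsto (fun n => ∑ i ∈ Finset.range n, a i • e i) atTop (𝓝 x)

/-- An `ℓ¹`-`K` tree on `X`: a tree on the unit sphere of `X` such that every node
`(x₁, …, x_n)` satisfies `‖∑ aᵢ xᵢ‖ ≥ K⁻¹ ∑ |aᵢ|`. -/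
def IsL1Tree (K : ℝ) (T : Set (List X)) : Prop :=
  IsTree T ∧ ∀ l ∈ T, (∀ x ∈ l, ‖x‖ = 1) ∧
    ∀ a : Fin l.length → ℝ, K⁻¹ * ∑ i, |a i| ≤ ‖∑ i : Fin l.length, a i • l.get i‖

/-- `I(X, K)`: the supremum of the orders of well-founded `ℓ¹`-`K` trees on `X`. -/
noncomputable def bourgainIndexK (K : ℝ) : Ordinal.{0} :=
  ⨆ T : {T : Set (List X) // IsL1Tree X K T ∧ WellFoundedTree T}, treeOrder T.1

/-- The Bourgain `ℓ¹`-index `I(X) = sup_{1 ≤ K < ∞} I(X, K)`. -/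
noncomputable def bourgainIndex : Ordinal.{0} :=
  ⨆ K : {K : ℝ // 1 ≤ K}, bourgainIndexK X K.1

/-- `I_b(X, K)` relative to the basis `e`: the supremum of the orders of
well-founded `ℓ¹`-`K` block trees on `X`. -/
noncomputable def blockIndexK (e : ℕ → X) (K : ℝ) : Ordinal.{0} :=
  ⨆ T : {T : Set (List X) //
      IsL1Tree X K T ∧ (∀ l ∈ T, ∃ cs, IsBlockNode X e l cs) ∧ WellFoundedTree T},
    treeOrder T.1

/-- The block `ℓ¹`-index `I_b(X) = sup_{1 ≤ K < ∞} I_b(X, K)`. -/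
noncomputable def blockIndex (e : ℕ → X) : Ordinal.{0} :=
  ⨆ K : {K : ℝ // 1 ≤ K}, blockIndexK X e K.1

end Banach

section Aux

/-- The `ℓ¹` "norm" of `x`: sum of `|x k|` over the support. -/
noncomputable def l1 (x : ℕ →₀ ℝ) : ℝ := ∑ k ∈ x.support, |x k|

lemma sigmaF_nonneg (F : Finset ℕ) (x : ℕ →₀ ℝ) : 0 ≤ sigmaF F x :=
  Finset.sum_nonneg fun _ _ => abs_nonneg _

lemma l1_nonneg (x : ℕ →₀ ℝ) : 0 ≤ l1 x :=
  Finset.sum_nonneg fun _ _ => abs_nonneg _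

lemma sigmaF_le_l1 (F : Finset ℕ) (x : ℕ →₀ ℝ) : sigmaF F x ≤ l1 x := by
  classical
  have h1 : sigmaF F x = ∑ k ∈ F ∩ x.support, |x k| := by
    refine (Finset.sum_subset Finset.inter_subset_left ?_).symm
    intro k hk hk'
    have : k ∉ x.support := fun h => hk' (Finset.mem_inter.2 ⟨hk, h⟩)
    simp [Finsupp.notMem_support_iff.1 this]
  rw [h1]
  exact Finset.sum_le_sum_of_subset_of_nonneg Finset.inter_subset_right
    (fun _ _ _ => abs_nonneg _)

lemma sigmaF_union_le (A B : Finset ℕ) (x : ℕ →₀ ℝ) :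
    sigmaF (A ∪ B) x ≤ sigmaF A x + sigmaF B x := by
  classical
  have h : sigmaF (A ∪ B) x = sigmaF A x + sigmaF (B \ A) x := by
    unfold sigmaF
    rw [← Finset.sum_union Finset.disjoint_sdiff, Finset.union_sdiff_self_eq_union]
  have h2 : sigmaF (B \ A) x ≤ sigmaF B x :=
    Finset.sum_le_sum_of_subset_of_nonneg Finset.sdiff_subset (fun _ _ _ => abs_nonneg _)
  linarith

lemma sigmaF_restr_eq (E : Finset ℕ) (x : ℕ →₀ ℝ) :
    sigmaF E (restr E x) = sigmaF E x := by
  classical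
  unfold sigmaF restr
  refine Finset.sum_congr rfl fun k hk => ?_
  rw [Finsupp.filter_apply_pos _ _ hk]

lemma l1_restr_le (E : Finset ℕ) (x : ℕ →₀ ℝ) : l1 (restr E x) ≤ sigmaF E x := by
  classical
  unfold l1 restr sigmaF
  rw [Finsupp.support_filter]
  have h1 : ∑ k ∈ x.support.filter (· ∈ E), |(Finsupp.filter (· ∈ E) x) k|
      = ∑ k ∈ x.support.filter (· ∈ E), |x k| := by
    refine Finset.sum_congr rfl fun k hk => ?_
    rw [Finsupp.filter_apply_pos _ _ (Finset.mem_filter.1 hk).2]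
  rw [h1]
  exact Finset.sum_le_sum_of_subset_of_nonneg
    (fun k hk => (Finset.mem_filter.1 hk).2) (fun _ _ _ => abs_nonneg _)

lemma famNorm_nonneg (𝓕 : Set (Finset ℕ)) (x : ℕ →₀ ℝ) : 0 ≤ famNorm 𝓕 x :=
  Real.sSup_nonneg (by rintro r ⟨F, _, rfl⟩; exact sigmaF_nonneg F x)

lemma famNorm_le_l1 (𝓕 : Set (Finset ℕ)) (x : ℕ →₀ ℝ) : famNorm 𝓕 x ≤ l1 x :=
  Real.sSup_le (by rintro r ⟨F, _, rfl⟩; exact sigmaF_le_l1 F x) (l1_nonneg x)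

lemma famNorm_bddAbove (𝓕 : Set (Finset ℕ)) (x : ℕ →₀ ℝ) :
    BddAbove {r : ℝ | ∃ F ∈ 𝓕, r = sigmaF F x} :=
  ⟨l1 x, by rintro r ⟨F, _, rfl⟩; exact sigmaF_le_l1 F x⟩

lemma le_famNorm {𝓕 : Set (Finset ℕ)} {F : Finset ℕ} (hF : F ∈ 𝓕) (x : ℕ →₀ ℝ) :
    sigmaF F x ≤ famNorm 𝓕 x :=
  le_csSup (famNorm_bddAbove 𝓕 x) ⟨F, hF, rfl⟩

lemma finLT_foldr (x : ℕ →₀ ℝ) :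
    ∀ (l : List (Finset ℕ)) (E : Finset ℕ), (∀ F ∈ l, F.Nonempty) →
      List.Chain' finLT (E :: l) → finLT E (l.foldr (· ∪ ·) ∅) := by
  intro l
  induction l with
  | nil => intro E _ _ a _ b hb; simp at hb
  | cons F l ih =>
      intro E hne hc a ha b hb
      simp only [List.foldr_cons, Finset.mem_union] at hb
      have hEF : finLT E F := (List.isChain_cons_cons.1 hc).1
      rcases hb with hb | hb
      · exact hEF a ha b hb
      · obtain ⟨f, hf⟩ := hne F (by simp)
        have hFl : finLT F (l.foldr (· ∪ ·) ∅) :=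
          ih F (fun G hG => hne G (by simp [hG])) (List.isChain_cons_cons.1 hc).2
        exact lt_trans (hEF a ha f hf) (hFl f hf b hb)

lemma sum_sigmaF_foldr (x : ℕ →₀ ℝ) :
    ∀ l : List (Finset ℕ), (∀ F ∈ l, F.Nonempty) → List.Chain' finLT l →
      (l.map fun E => sigmaF E x).sum ≤ sigmaF (l.foldr (· ∪ ·) ∅) x := by
  intro l
  induction l with
  | nil => simp [sigmaF]
  | cons E l ih =>
      intro hne hc
      simp only [List.map_cons, List.sum_cons, List.foldr_cons]
      have hdisj : Disjoint E (l.foldr (· ∪ ·) ∅) := by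
        refine Finset.disjoint_left.2 fun a ha ha' => ?_
        exact lt_irrefl a
          (finLT_foldr x l E (fun F hF => hne F (by simp [hF])) hc a ha a ha')
      have hU : sigmaF (E ∪ l.foldr (· ∪ ·) ∅) x
          = sigmaF E x + sigmaF (l.foldr (· ∪ ·) ∅) x := Finset.sum_union hdisj
      rw [hU]
      have hih := ih (fun F hF => hne F (by simp [hF])) hc.tail
      linarith

lemma normSeq_nonneg (Sa Sadm : Set (Finset ℕ)) (n : ℕ) (x : ℕ →₀ ℝ) :
    0 ≤ normSeq Sa Sadm n x := by
  induction n with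
  | zero => exact famNorm_nonneg Sa x
  | succ n ih => exact le_trans ih (le_max_left _ _)

lemma normSeq_le_l1 (Sa Sadm : Set (Finset ℕ)) (n : ℕ) (x : ℕ →₀ ℝ) :
    normSeq Sa Sadm n x ≤ l1 x := by
  induction n generalizing x with
  | zero => exact famNorm_le_l1 Sa x
  | succ n ih =>
      refine max_le (ih x) (Real.sSup_le ?_ (l1_nonneg x))
      rintro r ⟨l, hl, rfl⟩
      have h1 : (l.map fun E => normSeq Sa Sadm n (restr E x)).sum
          ≤ (l.map fun E => sigmaF E x).sum := by
        refine List.sum_le_sum fun E hE => ?_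
        exact le_trans (ih (restr E x)) (l1_restr_le E x)
      have h2 : (l.map fun E => sigmaF E x).sum ≤ sigmaF (l.foldr (· ∪ ·) ∅) x :=
        sum_sigmaF_foldr x l hl.1 hl.2.1
      have h3 : sigmaF (l.foldr (· ∪ ·) ∅) x ≤ l1 x := sigmaF_le_l1 _ x
      have hl1 : 0 ≤ l1 x := l1_nonneg x
      nlinarith

lemma normSeq_succ_bddAbove (Sa Sadm : Set (Finset ℕ)) (n : ℕ) (x : ℕ →₀ ℝ) :
    BddAbove {r : ℝ | ∃ l : List (Finset ℕ), IsAdmissible Sadm l ∧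
      r = (1 / 2) * ((l.map fun E => normSeq Sa Sadm n (restr E x)).sum)} := by
  refine ⟨l1 x, ?_⟩
  rintro r ⟨l, hl, rfl⟩
  have h1 : (l.map fun E => normSeq Sa Sadm n (restr E x)).sum
      ≤ (l.map fun E => sigmaF E x).sum :=
    List.sum_le_sum fun E _ => le_trans (normSeq_le_l1 Sa Sadm n (restr E x))
      (l1_restr_le E x)
  have h2 := sum_sigmaF_foldr x l hl.1 hl.2.1
  have h3 : sigmaF (l.foldr (· ∪ ·) ∅) x ≤ l1 x := sigmaF_le_l1 _ x
  have hl1 : 0 ≤ l1 x := l1_nonneg x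
  nlinarith

lemma famNorm_famF_le (Sa Sadm : Set (Finset ℕ)) (n : ℕ) (x : ℕ →₀ ℝ) :
    famNorm (famF Sa Sadm n) x ≤ 2 ^ n * normSeq Sa Sadm n x := by
  induction n generalizing x with
  | zero => simpa [famF, normSeq] using le_refl (famNorm Sa x)
  | succ n ih =>
      have hpos : (0:ℝ) ≤ 2 ^ (n + 1) * normSeq Sa Sadm (n + 1) x :=
        mul_nonneg (by positivity) (normSeq_nonneg _ _ _ _)
      refine Real.sSup_le ?_ hpos
      rintro r ⟨F, hF, rfl⟩
      obtain ⟨l, hladm, hlmem, rfl⟩ := hF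
      have step : ∀ E ∈ l, sigmaF E x ≤ 2 ^ n * normSeq Sa Sadm n (restr E x) := by
        intro E hE
        calc sigmaF E x = sigmaF E (restr E x) := (sigmaF_restr_eq E x).symm
          _ ≤ famNorm (famF Sa Sadm n) (restr E x) := le_famNorm (hlmem E hE) _
          _ ≤ 2 ^ n * normSeq Sa Sadm n (restr E x) := ih (restr E x)
      have h1 : sigmaF (l.foldr (· ∪ ·) ∅) x ≤ (l.map fun E => sigmaF E x).sum := by
        clear step hladm hlmem
        induction l with
        | nil => simp [sigmaF]
        | cons E l ihl =>
            simp only [List.foldr_cons, List.map_cons, List.sum_cons]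
            calc sigmaF (E ∪ l.foldr (· ∪ ·) ∅) x
                ≤ sigmaF E x + sigmaF (l.foldr (· ∪ ·) ∅) x := sigmaF_union_le _ _ x
              _ ≤ sigmaF E x + (l.map fun E => sigmaF E x).sum := by linarith [ihl]
      have h2 : (l.map fun E => sigmaF E x).sum
          ≤ (l.map fun E => 2 ^ n * normSeq Sa Sadm n (restr E x)).sum :=
        List.sum_le_sum step
      have h3 : (l.map fun E => 2 ^ n * normSeq Sa Sadm n (restr E x)).sum
          = 2 ^ (n + 1) * ((1 / 2) *
            (l.map fun E => normSeq Sa Sadm n (restr E x)).sum) := by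
        rw [List.sum_map_mul_left]
        ring
      have h4 : (1 / 2) * (l.map fun E => normSeq Sa Sadm n (restr E x)).sum
          ≤ normSeq Sa Sadm (n + 1) x := by
        refine le_trans (le_csSup (normSeq_succ_bddAbove Sa Sadm n x)
          ⟨l, hladm, rfl⟩) ?_
        exact le_max_right _ _
      calc sigmaF (l.foldr (· ∪ ·) ∅) x
          ≤ (l.map fun E => 2 ^ n * normSeq Sa Sadm n (restr E x)).sum :=
            le_trans h1 h2
        _ = 2 ^ (n + 1) * ((1 / 2) *
            (l.map fun E => normSeq Sa Sadm n (restr E x)).sum) := h3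
        _ ≤ 2 ^ (n + 1) * normSeq Sa Sadm (n + 1) x := by
            have : (0:ℝ) ≤ 2 ^ (n + 1) := by positivity
            nlinarith

lemma normSeq_le_tnorm (Sa Sadm : Set (Finset ℕ)) (n : ℕ) (x : ℕ →₀ ℝ) :
    normSeq Sa Sadm n x ≤ tnorm Sa Sadm x :=
  le_ciSup ⟨l1 x, by rintro r ⟨m, rfl⟩; exact normSeq_le_l1 Sa Sadm m x⟩ n

end Aux


/-- Proposition 4 of the paper: `‖a‖_{T̃} ≥ 2^{-n} ρ_n(a)` for all
`a ∈ c₀₀` and `n ≥ 0`, where `ρ_n = ‖·‖_{𝓕_n}`. -/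
theorem statement4 (seq : Ordinal → ℕ → Ordinal) (hseq : IsCtblLadder seq)
    (a b : Ordinal) (ha : a.card ≤ Cardinal.aleph0) (hb : b.card ≤ Cardinal.aleph0)
    (hb0 : b ≠ 0) (x : ℕ →₀ ℝ) (n : ℕ) :
    (1 / 2 ^ n) * famNorm (famF (schreier seq a) (schreier seq b) n) x ≤
      tnorm (schreier seq a) (schreier seq b) x := by
  have h1 := famNorm_famF_le (schreier seq a) (schreier seq b) n x
  have h2 := normSeq_le_tnorm (schreier seq a) (schreier seq b) n x
  calc (1 / 2 ^ n) * famNorm (famF (schreier seq a) (schreier seq b) n) x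
      ≤ (1 / 2 ^ n) * (2 ^ n * normSeq (schreier seq a) (schreier seq b) n x) :=
        mul_le_mul_of_nonneg_left h1 (by positivity)
    _ = normSeq (schreier seq a) (schreier seq b) n x := by
        field_simp
    _ ≤ tnorm (schreier seq a) (schreier seq b) x := h2


end LTIndex
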